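/- Let B be a family of blocks in a monoid M with parameter type Θ and let n ≥ 1. For any two parameter assignments θ and φ for triangles of height n, there exists a parameter assignment ψ such that T_n(θ) * T_n(φ) = T_n(ψ); that is, two triangles of height n can be merged into a single triangle of height n. -/
import Mathlib


/-- The cascade `C_{i,j}(θ) = B i (θ i) * B (i+1) (θ (i+1)) * ⋯ * B j (θ j)`. -/
def cascade {M Θ : Type*} [Monoid M] (B : ℕ → Θ → M) (i j : ℕ) (θ : ℕ → Θ) : M :=
  ((List.range (j + 1 - i)).map (fun k => B (i + k) (θ (i + k)))).prod

/-- The triangle `T_n(θ) = C_{n,n} * C_{n-1,n} * ⋯ * C_{1,n}`, where the `k`-th cascade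
`C_{n-k,n}` carries its own parameters `θ k`. -/
def triangle {M Θ : Type*} [Monoid M] (B : ℕ → Θ → M) (n : ℕ) (θ : ℕ → ℕ → Θ) : M :=
  ((List.range n).map (fun k => cascade B (n - k) n (θ k))).prod

section Aux
variable {M Θ : Type*} [Monoid M] (B : ℕ → Θ → M)

lemma cascade_congr {i j : ℕ} {θ θ' : ℕ → Θ} (h : ∀ k, i ≤ k → k ≤ j → θ k = θ' k) :
    cascade B i j θ = cascade B i j θ' := by
  unfold cascade
  congr 1
  apply List.map_congr_left
  intro k hk
  rw [List.mem_range] at hk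
  rw [h (i + k) (by omega) (by omega)]

lemma cascade_self (i : ℕ) (θ : ℕ → Θ) : cascade B i i θ = B i (θ i) := by
  unfold cascade
  rw [show i + 1 - i = 1 by omega]
  rw [show List.range 1 = [0] from rfl]
  simp

lemma cascade_succ_right {i j : ℕ} (h : i ≤ j + 1) (θ : ℕ → Θ) :
    cascade B i (j + 1) θ = cascade B i j θ * B (j + 1) (θ (j + 1)) := by
  unfold cascade
  rw [show j + 1 + 1 - i = (j + 1 - i) + 1 by omega, List.range_succ, List.map_append,
    List.prod_append]
  simp only [List.map_cons, List.map_nil, List.prod_cons, List.prod_nil, mul_one]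
  rw [show i + (j + 1 - i) = j + 1 by omega]

lemma cascade_succ_left {i j : ℕ} (h : i ≤ j) (θ : ℕ → Θ) :
    cascade B i j θ = B i (θ i) * cascade B (i + 1) j θ := by
  unfold cascade
  rw [show j + 1 - i = (j + 1 - (i + 1)) + 1 by omega, List.range_succ_eq_map,
    List.map_cons, List.prod_cons, List.map_map]
  simp only [Nat.add_zero]
  congr 1
  apply congrArg
  apply List.map_congr_left
  intro a _
  simp only [Function.comp]
  rw [show i + (a + 1) = i + 1 + a by omega]

lemma comm_cascade (hcomm : ∀ (i j : ℕ), 1 < Nat.dist i j → ∀ (α β : Θ),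
      B i α * B j β = B j β * B i α)
    {l j m : ℕ} (hm : j + 2 ≤ m) (θ : ℕ → Θ) (α : Θ) :
    B m α * cascade B l j θ = cascade B l j θ * B m α := by
  refine (Commute.list_prod_right _ _ ?_).eq
  intro y hy
  rw [List.mem_map] at hy
  obtain ⟨k, hk, rfl⟩ := hy
  rw [List.mem_range] at hk
  exact hcomm m (l + k) (by simp [Nat.dist]; omega) α (θ (l + k))

end Aux
section Abs
variable {M Θ : Type*} [Monoid M] (B : ℕ → Θ → M)
  (hfusion : ∀ (i : ℕ) (α β : Θ), ∃ a : Θ, B i α * B i β = B i a)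
  (hcomm : ∀ (i j : ℕ), 1 < Nat.dist i j → ∀ (α β : Θ), B i α * B j β = B j β * B i α)
  (hturnover : ∀ (i : ℕ) (α β γ : Θ), ∃ a b c : Θ,
      B i α * B (i + 1) β * B i γ = B (i + 1) a * B i b * B (i + 1) c)

include hfusion in
lemma casc_abs_top {l n : ℕ} (hl : l ≤ n) (θ : ℕ → Θ) (α : Θ) :
    ∃ θ', cascade B l n θ * B n α = cascade B l n θ' := by
  cases n with
  | zero =>
    have hl0 : l = 0 := by omega
    subst hl0
    obtain ⟨a, ha⟩ := hfusion 0 (θ 0) α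
    exact ⟨fun _ => a, by rw [cascade_self, cascade_self]; exact ha⟩
  | succ m =>
    obtain ⟨a, ha⟩ := hfusion (m + 1) (θ (m + 1)) α
    refine ⟨Function.update θ (m + 1) a, ?_⟩
    rw [cascade_succ_right B hl, cascade_succ_right B hl, mul_assoc, ha]
    congr 1
    · exact cascade_congr B (fun k _ h2 => (Function.update_of_ne (by omega) _ _).symm)
    · rw [Function.update_self]

include hcomm hturnover in
lemma casc_abs_mid {l i : ℕ} (hl : l ≤ i) :
    ∀ n, i + 1 ≤ n → ∀ θ α, ∃ a θ',
      cascade B l n θ * B i α = B (i + 1) a * cascade B l n θ' := by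
  refine Nat.le_induction ?_ ?_
  · -- n = i + 1
    intro θ α
    obtain ⟨a, b, c, habc⟩ := hturnover i (θ i) (θ (i + 1)) α
    rcases eq_or_lt_of_le hl with rfl | hlt
    · -- l = i
      refine ⟨a, Function.update (Function.update θ l b) (l + 1) c, ?_⟩
      rw [cascade_succ_right B (by omega) θ, cascade_self, habc,
        cascade_succ_right B (by omega), cascade_self,
        Function.update_self, Function.update_of_ne (by omega), Function.update_self,
        mul_assoc]
    · -- l < i
      obtain ⟨p, rfl⟩ : ∃ p, i = p + 1 := ⟨i - 1, by omega⟩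
      refine ⟨a, Function.update (Function.update θ (p + 1) b) (p + 1 + 1) c, ?_⟩
      have e1 : cascade B l (p + 1 + 1) θ =
          cascade B l p θ * B (p + 1) (θ (p + 1)) * B (p + 1 + 1) (θ (p + 1 + 1)) := by
        rw [cascade_succ_right B (show l ≤ p + 1 + 1 by omega) θ,
          cascade_succ_right B (show l ≤ p + 1 by omega) θ]
      calc cascade B l (p + 1 + 1) θ * B (p + 1) α
          = cascade B l p θ *
            (B (p + 1) (θ (p + 1)) * B (p + 1 + 1) (θ (p + 1 + 1)) * B (p + 1) α) := by
            rw [e1, mul_assoc, mul_assoc, ← mul_assoc (B (p + 1) (θ (p + 1)))]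
        _ = cascade B l p θ * (B (p + 1 + 1) a * (B (p + 1) b * B (p + 1 + 1) c)) := by
            rw [habc, mul_assoc]
        _ = B (p + 1 + 1) a * (cascade B l p θ * (B (p + 1) b * B (p + 1 + 1) c)) := by
            rw [← mul_assoc, ← mul_assoc,
              ← comm_cascade B hcomm (show p + 2 ≤ p + 1 + 1 by omega) θ a, mul_assoc, mul_assoc]
        _ = B (p + 1 + 1) a *
            cascade B l (p + 1 + 1) (Function.update (Function.update θ (p + 1) b) (p + 1 + 1) c) := by
            rw [cascade_succ_right B (show l ≤ p + 1 + 1 by omega),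
              cascade_succ_right B (show l ≤ p + 1 by omega)]
            rw [Function.update_self, Function.update_of_ne (show p + 1 ≠ p + 1 + 1 by omega),
              Function.update_self]
            rw [show (cascade B l p (Function.update (Function.update θ (p + 1) b) (p + 1 + 1) c)) =
              cascade B l p θ from
              cascade_congr B (fun k _ h2 => by
                rw [Function.update_of_ne (by omega), Function.update_of_ne (by omega)])]
            rw [mul_assoc]
  · -- step n → n + 1
    intro n hn ih θ α
    obtain ⟨a, θ', h'⟩ := ih θ α
    refine ⟨a, Function.update θ' (n + 1) (θ (n + 1)), ?_⟩
    rw [cascade_succ_right B (show l ≤ n + 1 by omega) θ, mul_assoc,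
      hcomm (n + 1) i (by simp [Nat.dist]; omega) _ α, ← mul_assoc, h', mul_assoc,
      cascade_succ_right B (show l ≤ n + 1 by omega)]
    congr 1
    rw [show cascade B l n (Function.update θ' (n + 1) (θ (n + 1))) = cascade B l n θ' from
      (cascade_congr B (fun k _ h2 => by rw [Function.update_of_ne (by omega)])).symm,
      Function.update_self]

end Abs
def ptri {M Θ : Type*} [Monoid M] (B : ℕ → Θ → M) (n m : ℕ) (θ : ℕ → ℕ → Θ) : M :=
  ((List.range m).map (fun k => cascade B (n - k) n (θ k))).prod

section Tri
variable {M Θ : Type*} [Monoid M] (B : ℕ → Θ → M)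
  (hfusion : ∀ (i : ℕ) (α β : Θ), ∃ a : Θ, B i α * B i β = B i a)
  (hcomm : ∀ (i j : ℕ), 1 < Nat.dist i j → ∀ (α β : Θ), B i α * B j β = B j β * B i α)
  (hturnover : ∀ (i : ℕ) (α β γ : Θ), ∃ a b c : Θ,
      B i α * B (i + 1) β * B i γ = B (i + 1) a * B i b * B (i + 1) c)

lemma ptri_zero (n : ℕ) (θ : ℕ → ℕ → Θ) : ptri B n 0 θ = 1 := rfl

lemma ptri_succ (n m : ℕ) (θ : ℕ → ℕ → Θ) :
    ptri B n (m + 1) θ = ptri B n m θ * cascade B (n - m) n (θ m) := by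
  unfold ptri
  rw [List.range_succ, List.map_append, List.prod_append]
  simp

lemma ptri_congr {n m : ℕ} {θ θ' : ℕ → ℕ → Θ} (h : ∀ k, k < m → θ k = θ' k) :
    ptri B n m θ = ptri B n m θ' := by
  unfold ptri
  congr 1
  apply List.map_congr_left
  intro k hk
  rw [List.mem_range] at hk
  rw [h k hk]

include hfusion hcomm hturnover in
lemma ptri_abs {n : ℕ} : ∀ m, m ≤ n → ∀ (θ : ℕ → ℕ → Θ) (i : ℕ) (α : Θ),
    n - m < i → i ≤ n → ∃ ψ, ptri B n m θ * B i α = ptri B n m ψ := by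
  intro m
  induction m with
  | zero => intro _ θ i α h1 h2; omega
  | succ m ih =>
    intro hm θ i α h1 h2
    rcases eq_or_lt_of_le h2 with rfl | hi
    · obtain ⟨θ', h'⟩ := casc_abs_top B hfusion (show i - m ≤ i by omega) (θ m) α
      refine ⟨Function.update θ m θ', ?_⟩
      rw [ptri_succ, ptri_succ, mul_assoc, h']
      congr 1
      · exact ptri_congr B (fun k hk => (Function.update_of_ne (by omega) _ _).symm)
      · rw [Function.update_self]
    · obtain ⟨a, θ', h'⟩ := casc_abs_mid B hcomm hturnover (show n - m ≤ i by omega) n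
        (by omega) (θ m) α
      obtain ⟨ψ₀, h₀⟩ := ih (by omega) θ (i + 1) a (by omega) (by omega)
      refine ⟨Function.update ψ₀ m θ', ?_⟩
      rw [ptri_succ, ptri_succ, mul_assoc, h', ← mul_assoc, h₀]
      congr 1
      · exact ptri_congr B (fun k hk => (Function.update_of_ne (by omega) _ _).symm)
      · rw [Function.update_self]

include hfusion hcomm hturnover in
lemma tri_abs_block {n i : ℕ} (h1 : 1 ≤ i) (h2 : i ≤ n) (θ : ℕ → ℕ → Θ) (α : Θ) :
    ∃ ψ, triangle B n θ * B i α = triangle B n ψ := by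
  have := ptri_abs B hfusion hcomm hturnover (n := n) n le_rfl θ i α (by omega) h2
  exact this

include hfusion hcomm hturnover in
lemma tri_abs_casc {n : ℕ} : ∀ (d l : ℕ), l + d = n → 1 ≤ l → ∀ (θ : ℕ → ℕ → Θ) (φ : ℕ → Θ),
    ∃ ψ, triangle B n θ * cascade B l n φ = triangle B n ψ := by
  intro d
  induction d with
  | zero =>
    intro l h hl θ φ
    have hln : l = n := by omega
    subst hln
    rw [cascade_self]
    exact tri_abs_block B hfusion hcomm hturnover hl le_rfl θ (φ l)
  | succ d ih =>
    intro l h hl θ φ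
    rw [cascade_succ_left B (show l ≤ n by omega)]
    obtain ⟨ψ₀, h₀⟩ := tri_abs_block B hfusion hcomm hturnover (n := n) hl (by omega) θ (φ l)
    obtain ⟨ψ, hψ⟩ := ih (l + 1) (by omega) (by omega) ψ₀ φ
    exact ⟨ψ, by rw [← mul_assoc, h₀, hψ]⟩

include hfusion hcomm hturnover in
lemma tri_abs_ptri {n : ℕ} : ∀ m, m ≤ n → ∀ (θ φ : ℕ → ℕ → Θ),
    ∃ ψ, triangle B n θ * ptri B n m φ = triangle B n ψ := by
  intro m
  induction m with
  | zero => intro _ θ φ; exact ⟨θ, by rw [ptri_zero, mul_one]⟩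
  | succ m ih =>
    intro hm θ φ
    obtain ⟨ψ₀, h₀⟩ := ih (by omega) θ φ
    obtain ⟨ψ, hψ⟩ := tri_abs_casc B hfusion hcomm hturnover (n := n) m (n - m) (by omega)
      (by omega) ψ₀ (φ m)
    exact ⟨ψ, by rw [ptri_succ, ← mul_assoc, h₀, hψ]⟩

end Tri


/-- **Corollary (triangle absorbs triangle).**  Let `B` be a family of blocks in a monoid `M`
(satisfying fusion, commutation and turnover) and `n ≥ 1`.  Two triangles of height `n`
can be merged into a single triangle of height `n`. -/
theorem triangle_absorbs_triangle {M Θ : Type*} [Monoid M] (B : ℕ → Θ → M)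
    (hfusion : ∀ (i : ℕ) (α β : Θ), ∃ a : Θ, B i α * B i β = B i a)
    (hcomm : ∀ (i j : ℕ), 1 < Nat.dist i j → ∀ (α β : Θ),
      B i α * B j β = B j β * B i α)
    (hturnover : ∀ (i : ℕ) (α β γ : Θ), ∃ a b c : Θ,
      B i α * B (i + 1) β * B i γ = B (i + 1) a * B i b * B (i + 1) c)
    (n : ℕ) (hn : 1 ≤ n) :
    ∀ (θ φ : ℕ → ℕ → Θ), ∃ ψ : ℕ → ℕ → Θ,
      triangle B n θ * triangle B n φ = triangle B n ψ := by
  intro θ φ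
  have h : triangle B n φ = ptri B n n φ := rfl
  rw [h]
  exact tri_abs_ptri B hfusion hcomm hturnover n le_rfl θ φ
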